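/- Let c1,...,c6 be real constants with c5 ≠ 0, let w : ℝ → ℝ be three times differentiable with w > 0 everywhere, and let h : ℝ → ℝ satisfy h'(z) = √(w(h(z))) for all z. If h satisfies c5·h'''' + c4·h''' + (c3 − c6)·h'' + c6·(h')² − c1·h' + exp(h) − c2 = 0 on ℝ, then for all z: 2·c5·w(h(z))·w'''(h(z)) + (c5·w'(h(z)) + 2·c4·√(w(h(z))))·w''(h(z)) + 2·(c3 − c6)·w'(h(z)) + 4·c6·w(h(z)) − 4·c1·√(w(h(z))) − 4·c2 + 4·exp(h(z)) = 0. -/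

import Mathlib

theorem stmt_14 (c1 c2 c3 c4 c5 c6 : ℝ) (hc5 : c5 ≠ 0)
    (w : ℝ → ℝ) (hw : ContDiff ℝ 3 w) (hwpos : ∀ s : ℝ, 0 < w s)
    (h : ℝ → ℝ) (hh : ∀ z : ℝ, deriv h z = Real.sqrt (w (h z)))
    (hode : ∀ z : ℝ, c5 * iteratedDeriv 4 h z + c4 * iteratedDeriv 3 h z
      + (c3 - c6) * iteratedDeriv 2 h z + c6 * (deriv h z) ^ 2 - c1 * deriv h z
      + Real.exp (h z) - c2 = 0) :
    ∀ z : ℝ,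
      2 * c5 * w (h z) * iteratedDeriv 3 w (h z)
        + (c5 * deriv w (h z) + 2 * c4 * Real.sqrt (w (h z))) * iteratedDeriv 2 w (h z)
        + 2 * (c3 - c6) * deriv w (h z)
        + 4 * c6 * w (h z)
        - 4 * c1 * Real.sqrt (w (h z))
        - 4 * c2 + 4 * Real.exp (h z) = 0 := by
  -- basic facts
  have hs : ∀ z, (0:ℝ) < Real.sqrt (w (h z)) := fun z => Real.sqrt_pos.2 (hwpos _)
  have hsne : ∀ z, Real.sqrt (w (h z)) ≠ 0 := fun z => (hs z).ne'
  have hsq : ∀ z, Real.sqrt (w (h z)) * Real.sqrt (w (h z)) = w (h z) :=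
    fun z => Real.mul_self_sqrt (hwpos _).le
  have hdiff : ∀ z, DifferentiableAt ℝ h z := by
    intro z
    apply differentiableAt_of_deriv_ne_zero
    rw [hh z]; exact hsne z
  have Hh : ∀ z, HasDerivAt h (Real.sqrt (w (h z))) z := by
    intro z
    have := (hdiff z).hasDerivAt
    rwa [hh z] at this
  -- differentiability of derivatives of w
  have hw1 : Differentiable ℝ w := hw.differentiable (by norm_num)
  have hw2 : Differentiable ℝ (deriv w) := by
    have : ContDiff ℝ 2 (deriv w) := by
      have := (ContDiff.iterate_deriv' 2 1 (f := w) (by exact_mod_cast hw))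
      simpa using this
    exact this.differentiable (by norm_num)
  have hw3 : Differentiable ℝ (deriv (deriv w)) := by
    have : ContDiff ℝ 1 (deriv^[2] w) :=
      ContDiff.iterate_deriv' 1 2 (f := w) (by exact_mod_cast hw)
    have h2 : deriv^[2] w = deriv (deriv w) := by
      simp [Function.iterate_succ, Function.comp]
    rw [h2] at this
    exact this.differentiable (by norm_num)
  have hitw2 : iteratedDeriv 2 w = deriv (deriv w) := by
    rw [iteratedDeriv_eq_iterate]; simp [Function.iterate_succ, Function.comp]
  have hitw3 : iteratedDeriv 3 w = deriv (deriv (deriv w)) := by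
    rw [iteratedDeriv_eq_iterate]; simp [Function.iterate_succ, Function.comp]
  -- derivative of sqrt (w ∘ h)
  have E1 : ∀ z, HasDerivAt (fun z => Real.sqrt (w (h z))) (deriv w (h z) / 2) z := by
    intro z
    have hwh : HasDerivAt (fun z => w (h z)) (deriv w (h z) * Real.sqrt (w (h z))) z :=
      ((hw1 (h z)).hasDerivAt).comp z (Hh z)
    have hsqrt := (Real.hasDerivAt_sqrt (hwpos (h z)).ne').comp z hwh
    refine hsqrt.congr_deriv ?_
    field_simp [hsne z]
  have h2 : ∀ z, iteratedDeriv 2 h z = deriv w (h z) / 2 := by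
    intro z
    rw [iteratedDeriv_succ, iteratedDeriv_one]
    have : deriv h = fun z => Real.sqrt (w (h z)) := funext hh
    rw [this]
    exact (E1 z).deriv
  have E2 : ∀ z, HasDerivAt (fun z => deriv w (h z) / 2)
      (deriv (deriv w) (h z) * Real.sqrt (w (h z)) / 2) z := by
    intro z
    exact (((hw2 (h z)).hasDerivAt.comp z (Hh z))).div_const 2
  have h3 : ∀ z, iteratedDeriv 3 h z = deriv (deriv w) (h z) * Real.sqrt (w (h z)) / 2 := by
    intro z
    rw [iteratedDeriv_succ]
    have : iteratedDeriv 2 h = fun z => deriv w (h z) / 2 := funext h2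
    rw [this]
    exact (E2 z).deriv
  have h4 : ∀ z, iteratedDeriv 4 h z =
      (deriv (deriv (deriv w)) (h z) * w (h z)
        + deriv (deriv w) (h z) * (deriv w (h z) / 2)) / 2 := by
    intro z
    rw [show (4:ℕ) = 3 + 1 from rfl, iteratedDeriv_succ]
    have : iteratedDeriv 3 h = fun z => deriv (deriv w) (h z) * Real.sqrt (w (h z)) / 2 :=
      funext h3
    rw [this]
    have E3 : HasDerivAt (fun z => deriv (deriv w) (h z) * Real.sqrt (w (h z)) / 2)
        ((deriv (deriv (deriv w)) (h z) * Real.sqrt (w (h z)) * Real.sqrt (w (h z))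
          + deriv (deriv w) (h z) * (deriv w (h z) / 2)) / 2) z := by
      have hf : HasDerivAt (fun z => deriv (deriv w) (h z))
          (deriv (deriv (deriv w)) (h z) * Real.sqrt (w (h z))) z :=
        (hw3 (h z)).hasDerivAt.comp z (Hh z)
      exact (hf.mul (E1 z)).div_const 2
    rw [E3.deriv, mul_assoc, hsq z]
  intro z
  have ho := hode z
  rw [h4 z, h3 z, h2 z, hh z, hitw2, hitw3] at *
  rw [Real.sq_sqrt (hwpos _).le] at ho
  linear_combination 4 * ho
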